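/- arXiv:1205.5244 — 5 statements merged into one kernel-verified Lean document; each statement's English description precedes it below -/
import Mathlib

section
/- For a Lipschitz curve X : [0,T] → ℝ³ with |Ẋ(s)| < 1 for all s, the set O_X^t = ⋃_{s ∈ [0,t], ω ∈ S²} {X(s) - s·ω} equals the closed ball B(X(t), t). -/
open MeasureTheory Set

/-- For a curve `X : [0,T] → ℝ³` with speed strictly less than 1
(particles slower than light), the backward light-cone image
`O_X^t = {X(s) - s•ω : s ∈ [0,t], ω ∈ S²}` equals the closed ball `B(X(t), t)`. -/
theorem lightcone_image_eq_closedBall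
    (T : ℝ) (hT : 0 ≤ T)
    (X X' : ℝ → EuclideanSpace ℝ (Fin 3))
    (hderiv : ∀ s ∈ Set.Icc (0:ℝ) T, HasDerivAt X (X' s) s)
    (hspeed : ∀ s ∈ Set.Icc (0:ℝ) T, ‖X' s‖ < 1)
    (t : ℝ) (ht : t ∈ Set.Icc (0:ℝ) T) :
    {z : EuclideanSpace ℝ (Fin 3) |
        ∃ s ∈ Set.Icc (0:ℝ) t, ∃ ω : EuclideanSpace ℝ (Fin 3),
          ‖ω‖ = 1 ∧ z = X s - s • ω}
      = Metric.closedBall (X t) t := by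
  obtain ⟨ht0, htT⟩ := ht
  have hsub : Set.Icc (0:ℝ) t ⊆ Set.Icc 0 T := Set.Icc_subset_Icc le_rfl htT
  -- mean value estimate on [0,t]
  have hmv : ∀ x ∈ Set.Icc (0:ℝ) t, ‖X x - X 0‖ ≤ 1 * (x - 0) := by
    refine norm_image_sub_le_of_norm_deriv_le_segment'
      (fun x hx => ((hderiv x (hsub hx)).hasDerivWithinAt)) (fun x hx => ?_)
    exact (hspeed x (hsub (Set.Ico_subset_Icc_self hx))).le
  -- more useful: ‖X t - X s‖ ≤ t - s for s ∈ [0,t]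
  have hmv2 : ∀ s ∈ Set.Icc (0:ℝ) t, ‖X t - X s‖ ≤ t - s := by
    intro s ⟨hs0, hst⟩
    have hsubs : Set.Icc s t ⊆ Set.Icc 0 T :=
      Set.Icc_subset_Icc hs0 htT
    have := norm_image_sub_le_of_norm_deriv_le_segment'
      (f := X) (f' := X') (a := s) (b := t)
      (fun x hx => ((hderiv x (hsubs hx)).hasDerivWithinAt))
      (fun x hx => (hspeed x (hsubs (Set.Ico_subset_Icc_self hx))).le)
      t ⟨hst, le_rfl⟩
    simpa using this
  have hcont : ContinuousOn X (Set.Icc 0 t) := fun x hx =>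
    ((hderiv x (hsub hx)).continuousAt).continuousWithinAt
  ext z
  simp only [Set.mem_setOf_eq, Metric.mem_closedBall]
  constructor
  · rintro ⟨s, hs, ω, hω, rfl⟩
    have h1 : dist (X s - s • ω) (X t) ≤ ‖X t - X s‖ + ‖s • ω‖ := by
      rw [dist_eq_norm]
      calc ‖X s - s • ω - X t‖ = ‖(X s - X t) - s • ω‖ := by congr 1; abel
        _ ≤ ‖X s - X t‖ + ‖s • ω‖ := norm_sub_le _ _
        _ = ‖X t - X s‖ + ‖s • ω‖ := by rw [norm_sub_rev]
    have h2 : ‖s • ω‖ = s := by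
      rw [norm_smul, hω, Real.norm_eq_abs, abs_of_nonneg hs.1, mul_one]
    have := hmv2 s hs
    linarith
  · intro hz
    -- find s with ‖X s - z‖ = s by IVT on f s = ‖X s - z‖ - s
    set f : ℝ → ℝ := fun s => ‖X s - z‖ - s with hf
    have hfc : ContinuousOn f (Set.Icc 0 t) := by
      apply ContinuousOn.sub
      · exact ((hcont.sub continuousOn_const).norm)
      · exact continuousOn_id
    have hft : f t ≤ 0 := by
      simp only [f]
      have : ‖X t - z‖ ≤ t := by
        rw [← dist_eq_norm, dist_comm, ← Metric.mem_closedBall]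
        exact hz
      linarith
    have hf0 : 0 ≤ f 0 := by simp [f, norm_nonneg]
    have : (0:ℝ) ∈ f '' (Set.Icc 0 t) := by
      apply intermediate_value_Icc' ht0 hfc
      exact ⟨hft, hf0⟩
    obtain ⟨s, hs, hfs⟩ := this
    have hXs : ‖X s - z‖ = s := by
      have : ‖X s - z‖ - s = 0 := hfs
      linarith
    rcases eq_or_lt_of_le hs.1 with hs0 | hs0
    · -- s = 0, so X 0 = z, pick any unit ω
      refine ⟨0, ⟨le_rfl, ht0⟩, EuclideanSpace.single 0 1, ?_, ?_⟩
      · simp [EuclideanSpace.norm_single]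
      · have h0 : ‖X 0 - z‖ = 0 := by rw [hs0]; exact hXs
        have hz0 : X 0 = z := sub_eq_zero.mp (norm_eq_zero.mp h0)
        rw [zero_smul, sub_zero]
        exact hz0.symm
    · refine ⟨s, hs, s⁻¹ • (X s - z), ?_, ?_⟩
      · rw [norm_smul, hXs, Real.norm_eq_abs, abs_of_pos (inv_pos.mpr hs0),
          inv_mul_cancel₀ (ne_of_gt hs0)]
      · rw [smul_smul, mul_inv_cancel₀ (ne_of_gt hs0), one_smul]
        abel
end

section
/- Let X, X^δ : [0,T] → ℝ³ be curves with |Ẋ(s)| ≤ 1 - 1/(CK) and |Ẋ^δ(s)| ≤ 1 - 1/(CK) for some constants C, K. Suppose for a point z we have z = X(s_X) - s_X·ω_X = X^δ(s_{X^δ}) - s_{X^δ}·ω_{X^δ} with ω_X, ω_{X^δ} ∈ S² and s_X, s_{X^δ} > 0. Then |s_X - s_{X^δ}| ≤ C·K · max_{s ≤ min(s_X, s_{X^δ})} |X(s) - X^δ(s)|. -/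
open MeasureTheory Set

private lemma retarded_aux (T C K : ℝ) (hC : 0 < C) (hK : 0 < K) (hCK : 1 < C * K)
    (X Xδ X' Xδ' : ℝ → EuclideanSpace ℝ (Fin 3))
    (hX : ∀ s ∈ Set.Icc (0:ℝ) T, HasDerivAt X (X' s) s)
    (hXδ : ∀ s ∈ Set.Icc (0:ℝ) T, HasDerivAt Xδ (Xδ' s) s)
    (hXb : ∀ s ∈ Set.Icc (0:ℝ) T, ‖X' s‖ ≤ 1 - 1/(C*K))
    (z : EuclideanSpace ℝ (Fin 3)) (sX sXδ : ℝ)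
    (ωX ωXδ : EuclideanSpace ℝ (Fin 3))
    (h0X : 0 < sX) (hXT : sX ≤ T) (h0δ : 0 < sXδ) (hδT : sXδ ≤ T)
    (hω : ‖ωX‖ = 1) (hωδ : ‖ωXδ‖ = 1)
    (hz1 : z = X sX - sX • ωX) (hz2 : z = Xδ sXδ - sXδ • ωXδ)
    (hle : sXδ ≤ sX) :
    sX - sXδ ≤ C * K * ⨆ s ∈ Set.Icc (0:ℝ) sXδ, ‖X s - Xδ s‖ := by
  have hCK0 : 0 < C * K := mul_pos hC hK
  -- norms of the light cone relations
  have hn1 : ‖X sX - z‖ = sX := by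
    rw [hz1]
    have : X sX - (X sX - sX • ωX) = sX • ωX := by abel
    rw [this, norm_smul, hω, Real.norm_eq_abs, abs_of_pos h0X, mul_one]
  have hn2 : ‖Xδ sXδ - z‖ = sXδ := by
    rw [hz2]
    have : Xδ sXδ - (Xδ sXδ - sXδ • ωXδ) = sXδ • ωXδ := by abel
    rw [this, norm_smul, hωδ, Real.norm_eq_abs, abs_of_pos h0δ, mul_one]
  -- step 1 : sX - sXδ ≤ ‖X sX - Xδ sXδ‖
  have step1 : sX - sXδ ≤ ‖X sX - Xδ sXδ‖ := by
    calc sX - sXδ = ‖X sX - z‖ - ‖Xδ sXδ - z‖ := by rw [hn1, hn2]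
    _ ≤ ‖(X sX - z) - (Xδ sXδ - z)‖ := norm_sub_norm_le _ _
    _ = ‖X sX - Xδ sXδ‖ := by congr 1; abel
  -- mean value on [sXδ, sX]
  have hsub : Set.Icc sXδ sX ⊆ Set.Icc (0:ℝ) T := fun x hx =>
    ⟨le_trans h0δ.le hx.1, le_trans hx.2 hXT⟩
  have mvt : ‖X sX - X sXδ‖ ≤ (1 - 1/(C*K)) * (sX - sXδ) := by
    have h := Convex.norm_image_sub_le_of_norm_hasDerivWithin_le
      (f := X) (f' := X') (C := 1 - 1/(C*K)) (s := Set.Icc sXδ sX)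
      (fun x hx => (hX x (hsub hx)).hasDerivWithinAt)
      (fun x hx => hXb x (hsub hx))
      (convex_Icc _ _) (Set.left_mem_Icc.2 hle) (Set.right_mem_Icc.2 hle)
    calc ‖X sX - X sXδ‖ ≤ (1 - 1/(C*K)) * ‖sX - sXδ‖ := h
    _ = (1 - 1/(C*K)) * (sX - sXδ) := by
        rw [Real.norm_eq_abs, abs_of_nonneg (by linarith)]
  -- sup bound
  set M : ℝ := ⨆ s ∈ Set.Icc (0:ℝ) sXδ, ‖X s - Xδ s‖ with hM
  have hcont : ContinuousOn (fun s => ‖X s - Xδ s‖) (Set.Icc (0:ℝ) sXδ) := by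
    apply ContinuousOn.norm
    apply ContinuousOn.sub
    · exact fun s hs => ((hX s ⟨hs.1, hs.2.trans hδT⟩).continuousAt).continuousWithinAt
    · exact fun s hs => ((hXδ s ⟨hs.1, hs.2.trans hδT⟩).continuousAt).continuousWithinAt
  have hbdd : BddAbove ((fun s => ‖X s - Xδ s‖) '' Set.Icc (0:ℝ) sXδ) :=
    (isCompact_Icc.image_of_continuousOn hcont).bddAbove
  have hmem : sXδ ∈ Set.Icc (0:ℝ) sXδ := Set.right_mem_Icc.2 h0δ.le
  have hbdd2 : BddAbove (Set.range fun s =>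
      ⨆ (_ : s ∈ Set.Icc (0:ℝ) sXδ), ‖X s - Xδ s‖) := by
    obtain ⟨B, hB⟩ := hbdd
    refine ⟨max B 0, ?_⟩
    rintro _ ⟨s, rfl⟩
    show (⨆ (_ : s ∈ Set.Icc (0:ℝ) sXδ), ‖X s - Xδ s‖) ≤ max B 0
    by_cases hs : s ∈ Set.Icc (0:ℝ) sXδ
    · rw [ciSup_pos hs]
      exact le_max_of_le_left (hB ⟨s, hs, rfl⟩)
    · haveI : IsEmpty (s ∈ Set.Icc (0:ℝ) sXδ) := ⟨hs⟩
      rw [Real.iSup_of_isEmpty]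
      exact le_max_right _ _
  have hMge : ‖X sXδ - Xδ sXδ‖ ≤ M := by
    have h1 : ‖X sXδ - Xδ sXδ‖
        = ⨆ (_ : sXδ ∈ Set.Icc (0:ℝ) sXδ), ‖X sXδ - Xδ sXδ‖ := (ciSup_pos (f := fun _ => ‖X sXδ - Xδ sXδ‖) hmem).symm
    rw [hM, h1]
    exact le_ciSup hbdd2 sXδ
  -- combine
  have key : sX - sXδ ≤ (1 - 1/(C*K)) * (sX - sXδ) + M := by
    calc sX - sXδ ≤ ‖X sX - Xδ sXδ‖ := step1
    _ ≤ ‖X sX - X sXδ‖ + ‖X sXδ - Xδ sXδ‖ := norm_sub_le_norm_sub_add_norm_sub _ _ _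
    _ ≤ (1 - 1/(C*K)) * (sX - sXδ) + M := add_le_add mvt hMge
  have h1 : (1/(C*K)) * (sX - sXδ) ≤ M := by nlinarith
  calc sX - sXδ = (C*K) * ((1/(C*K)) * (sX - sXδ)) := by field_simp
  _ ≤ (C*K) * M := by
      apply mul_le_mul_of_nonneg_left h1 hCK0.le
  _ = C * K * M := by ring

/-- retarded-time estimate.  If `X, X^δ` are curves with speed at most
`1 - 1/(CK)` and a point `z` is represented on the backward light cones of both curves,
`z = X(s_X) - s_X • ω_X = X^δ(s_{X^δ}) - s_{X^δ} • ω_{X^δ}`, then (with a universal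
constant `c`)
`|s_X - s_{X^δ}| ≤ c C K · max_{s ≤ min(s_X, s_{X^δ})} |X(s) - X^δ(s)|`. -/
theorem retarded_time_estimate :
    ∃ c : ℝ, 0 < c ∧
      ∀ (T C K : ℝ), 0 < T → 0 < C → 0 < K → 1 < C * K →
      ∀ (X Xδ X' Xδ' : ℝ → EuclideanSpace ℝ (Fin 3)),
      (∀ s ∈ Set.Icc (0:ℝ) T, HasDerivAt X (X' s) s) →
      (∀ s ∈ Set.Icc (0:ℝ) T, HasDerivAt Xδ (Xδ' s) s) →
      (∀ s ∈ Set.Icc (0:ℝ) T, ‖X' s‖ ≤ 1 - 1/(C*K)) →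
      (∀ s ∈ Set.Icc (0:ℝ) T, ‖Xδ' s‖ ≤ 1 - 1/(C*K)) →
      ∀ (z : EuclideanSpace ℝ (Fin 3)) (sX sXδ : ℝ)
        (ωX ωXδ : EuclideanSpace ℝ (Fin 3)),
      0 < sX → sX ≤ T → 0 < sXδ → sXδ ≤ T →
      ‖ωX‖ = 1 → ‖ωXδ‖ = 1 →
      z = X sX - sX • ωX → z = Xδ sXδ - sXδ • ωXδ →
      |sX - sXδ| ≤ c * C * K * ⨆ s ∈ Set.Icc (0:ℝ) (min sX sXδ), ‖X s - Xδ s‖ := by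
  refine ⟨1, one_pos, ?_⟩
  intro T C K hT hC hK hCK X Xδ X' Xδ' hX hXδ hXb hXδb z sX sXδ ωX ωXδ
    h0X hXT h0δ hδT hω hωδ hz1 hz2
  rw [one_mul]
  rcases le_total sXδ sX with hle | hle
  · rw [min_eq_right hle, abs_of_nonneg (by linarith)]
    exact retarded_aux T C K hC hK hCK X Xδ X' Xδ' hX hXδ hXb z sX sXδ ωX ωXδ
      h0X hXT h0δ hδT hω hωδ hz1 hz2 hle
  · rw [min_eq_left hle, abs_of_nonpos (by linarith)]
    have h := retarded_aux T C K hC hK hCK Xδ X Xδ' X' hXδ hX hXδb z sXδ sX ωXδ ωX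
      h0δ hδT h0X hXT hωδ hω hz2 hz1 hle
    have : (⨆ s ∈ Set.Icc (0:ℝ) sX, ‖Xδ s - X s‖)
        = ⨆ s ∈ Set.Icc (0:ℝ) sX, ‖X s - Xδ s‖ := by
      simp_rw [norm_sub_rev]
    rw [this] at h
    linarith
end

section
/- Under the same hypotheses as the retarded-time estimate, one also has |ω_X - ω_{X^δ}| ≤ C·K · (max_{s ≤ min(s_X, s_{X^δ})} |X(s) - X^δ(s)|) · (1/s_X + 1/s_{X^δ}). -/
open MeasureTheory Set

private lemma angle_aux (T C K : ℝ) (hT : 0 < T) (hC : 0 < C) (hK : 0 < K)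
    (hCK : 1 < C * K)
    (X Xδ X' Xδ' : ℝ → EuclideanSpace ℝ (Fin 3))
    (hX : ∀ s ∈ Set.Icc (0:ℝ) T, HasDerivAt X (X' s) s)
    (hXδ : ∀ s ∈ Set.Icc (0:ℝ) T, HasDerivAt Xδ (Xδ' s) s)
    (hX' : ∀ s ∈ Set.Icc (0:ℝ) T, ‖X' s‖ ≤ 1 - 1/(C*K))
    (hXδ' : ∀ s ∈ Set.Icc (0:ℝ) T, ‖Xδ' s‖ ≤ 1 - 1/(C*K))
    (z : EuclideanSpace ℝ (Fin 3)) (sX sXδ : ℝ)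
    (ωX ωXδ : EuclideanSpace ℝ (Fin 3))
    (hsX : 0 < sX) (hsXT : sX ≤ T) (hsXδ : 0 < sXδ) (hsXδT : sXδ ≤ T)
    (hωX : ‖ωX‖ = 1) (hωXδ : ‖ωXδ‖ = 1)
    (hz1 : z = X sX - sX • ωX) (hz2 : z = Xδ sXδ - sXδ • ωXδ)
    (hle : sX ≤ sXδ) :
    ‖ωX - ωXδ‖ ≤ 2 * C * K *
        (⨆ s ∈ Set.Icc (0:ℝ) (min sX sXδ), ‖X s - Xδ s‖) * (1/sX + 1/sXδ) := by
  have hck : (0:ℝ) < C * K := by positivity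
  have hmin : min sX sXδ = sX := min_eq_left hle
  rw [hmin]
  set M := ⨆ s ∈ Set.Icc (0:ℝ) sX, ‖X s - Xδ s‖ with hMdef
  -- continuity and boundedness on the compact interval
  have hXc : ContinuousOn X (Set.Icc 0 sX) := fun s hs =>
    ((hX s ⟨hs.1, hs.2.trans hsXT⟩).continuousAt).continuousWithinAt
  have hXδc : ContinuousOn Xδ (Set.Icc 0 sX) := fun s hs =>
    ((hXδ s ⟨hs.1, hs.2.trans hsXT⟩).continuousAt).continuousWithinAt
  obtain ⟨B, hB⟩ := (isCompact_Icc (a := (0:ℝ)) (b := sX)).exists_bound_of_continuousOn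
    (hXc.sub hXδc)
  have hbdd : BddAbove (Set.range fun s => ⨆ _ : s ∈ Set.Icc (0:ℝ) sX, ‖X s - Xδ s‖) := by
    refine ⟨max B 0, ?_⟩
    rintro x ⟨s, rfl⟩
    by_cases hs : s ∈ Set.Icc (0:ℝ) sX
    · have h1 : (⨆ _ : s ∈ Set.Icc (0:ℝ) sX, ‖X s - Xδ s‖) = ‖X s - Xδ s‖ := ciSup_pos hs
      exact le_trans (le_of_eq h1) (le_max_of_le_left (hB s hs))
    · haveI : IsEmpty (s ∈ Set.Icc (0:ℝ) sX) := ⟨hs⟩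
      have h1 : (⨆ _ : s ∈ Set.Icc (0:ℝ) sX, ‖X s - Xδ s‖) = 0 := Real.iSup_of_isEmpty _
      exact le_trans (le_of_eq h1) (le_max_right B (0:ℝ))
  have hMle : ∀ s ∈ Set.Icc (0:ℝ) sX, ‖X s - Xδ s‖ ≤ M := by
    intro s hs
    have h1 : (⨆ _ : s ∈ Set.Icc (0:ℝ) sX, ‖X s - Xδ s‖) = ‖X s - Xδ s‖ := ciSup_pos hs
    calc ‖X s - Xδ s‖ = ⨆ _ : s ∈ Set.Icc (0:ℝ) sX, ‖X s - Xδ s‖ := h1.symm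
      _ ≤ M := le_ciSup hbdd s
  have hM0 : 0 ≤ M := (norm_nonneg _).trans (hMle 0 ⟨le_refl _, hsX.le⟩)
  -- Lipschitz bound for Xδ
  have hLip : ‖Xδ sXδ - Xδ sX‖ ≤ (1 - 1/(C*K)) * (sXδ - sX) := by
    have h := Convex.norm_image_sub_le_of_norm_hasDerivWithin_le
      (f := Xδ) (f' := Xδ') (s := Set.Icc (0:ℝ) T)
      (fun x hx => (hXδ x hx).hasDerivWithinAt) hXδ' (convex_Icc _ _)
      ⟨hsX.le, hsXT⟩ ⟨hsXδ.le, hsXδT⟩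
    calc ‖Xδ sXδ - Xδ sX‖ ≤ (1 - 1/(C*K)) * ‖sXδ - sX‖ := h
      _ = (1 - 1/(C*K)) * (sXδ - sX) := by
          rw [Real.norm_eq_abs, abs_of_nonneg (by linarith)]
  -- the two cone vectors
  have hu : X sX - z = sX • ωX := by rw [hz1]; exact sub_sub_cancel _ _
  have hv : Xδ sXδ - z = sXδ • ωXδ := by rw [hz2]; exact sub_sub_cancel _ _
  have hunorm : ‖X sX - z‖ = sX := by
    rw [hu, norm_smul, hωX, Real.norm_eq_abs, abs_of_pos hsX, mul_one]
  have hvnorm : ‖Xδ sXδ - z‖ = sXδ := by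
    rw [hv, norm_smul, hωXδ, Real.norm_eq_abs, abs_of_pos hsXδ, mul_one]
  -- retarded-time estimate
  have hd1 : sXδ - sX ≤ ‖(Xδ sXδ - z) - (X sX - z)‖ := by
    calc sXδ - sX = ‖Xδ sXδ - z‖ - ‖X sX - z‖ := by rw [hunorm, hvnorm]
      _ ≤ ‖(Xδ sXδ - z) - (X sX - z)‖ := norm_sub_norm_le _ _
  have hdiff : (Xδ sXδ - z) - (X sX - z) = (Xδ sXδ - Xδ sX) + (Xδ sX - X sX) := by abel
  have hDb : ‖(Xδ sXδ - z) - (X sX - z)‖ ≤ (1 - 1/(C*K)) * (sXδ - sX) + M := by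
    rw [hdiff]
    refine le_trans (norm_add_le _ _) (add_le_add hLip ?_)
    exact (norm_sub_rev _ _).trans_le (hMle sX ⟨hsX.le, le_refl _⟩)
  have hdM : sXδ - sX ≤ C * K * M := by
    have h2 : (sXδ - sX) * (1/(C*K)) ≤ M := by nlinarith [hd1.trans hDb]
    have h3 := mul_le_mul_of_nonneg_right h2 hck.le
    rw [mul_assoc, one_div_mul_cancel hck.ne', mul_one] at h3
    linarith
  have hL0 : (0:ℝ) ≤ 1 - 1/(C*K) := by
    rw [sub_nonneg]; exact (div_le_one hck).mpr hCK.le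
  have hid : (1 - 1/(C*K)) * (C*K*M) = C*K*M - M := by
    field_simp
  have hD : ‖(Xδ sXδ - z) - (X sX - z)‖ ≤ C * K * M := by
    have h4 := mul_le_mul_of_nonneg_left hdM hL0
    linarith [hDb]
  -- express the directions
  have hωXe : ωX = sX⁻¹ • (X sX - z) := by
    rw [hu, smul_smul, inv_mul_cancel₀ hsX.ne', one_smul]
  have hωXδe : ωXδ = sXδ⁻¹ • (Xδ sXδ - z) := by
    rw [hv, smul_smul, inv_mul_cancel₀ hsXδ.ne', one_smul]
  have hsplit : ωX - ωXδ =
      sX⁻¹ • ((X sX - z) - (Xδ sXδ - z)) + (sX⁻¹ - sXδ⁻¹) • (Xδ sXδ - z) := by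
    rw [hωXe, hωXδe]; module
  have hinv : sXδ⁻¹ ≤ sX⁻¹ := by
    exact inv_anti₀ hsX hle
  have step1 : ‖ωX - ωXδ‖ ≤ sX⁻¹ * (C*K*M) + (sX⁻¹ - sXδ⁻¹) * sXδ := by
    rw [hsplit]
    refine le_trans (norm_add_le _ _) (add_le_add ?_ ?_)
    · rw [norm_smul, Real.norm_eq_abs, abs_of_pos (inv_pos.mpr hsX)]
      refine mul_le_mul_of_nonneg_left ?_ (inv_pos.mpr hsX).le
      rw [norm_sub_rev]; exact hD
    · rw [norm_smul, Real.norm_eq_abs, abs_of_nonneg (by linarith), hvnorm]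
  have step2 : (sX⁻¹ - sXδ⁻¹) * sXδ ≤ sX⁻¹ * (C*K*M) := by
    have he : (sX⁻¹ - sXδ⁻¹) * sXδ = (sXδ - sX) * sX⁻¹ := by
      field_simp
    rw [he]
    calc (sXδ - sX) * sX⁻¹ ≤ (C*K*M) * sX⁻¹ :=
          mul_le_mul_of_nonneg_right hdM (inv_pos.mpr hsX).le
      _ = sX⁻¹ * (C*K*M) := mul_comm _ _
  have hfinal : ‖ωX - ωXδ‖ ≤ 2 * C * K * M * (1/sX + 1/sXδ) := by
    have h5 : (0:ℝ) ≤ C*K*M * (1/sXδ) := by positivity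
    have h6 : sX⁻¹ * (C*K*M) + sX⁻¹ * (C*K*M) = 2 * C * K * M * (1/sX) := by
      rw [one_div]; ring
    calc ‖ωX - ωXδ‖ ≤ sX⁻¹ * (C*K*M) + (sX⁻¹ - sXδ⁻¹) * sXδ := step1
      _ ≤ sX⁻¹ * (C*K*M) + sX⁻¹ * (C*K*M) := add_le_add (le_refl _) step2
      _ = 2 * C * K * M * (1/sX) := h6
      _ ≤ 2 * C * K * M * (1/sX + 1/sXδ) := by
          refine mul_le_mul_of_nonneg_left ?_ (by positivity)
          linarith [one_div_pos.mpr hsXδ]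
  exact hfinal


/-- angular estimate on the backward light cone.  Under the same
hypotheses as the retarded-time estimate, with a universal constant `c`,
`|ω_X - ω_{X^δ}| ≤ c C K · (max_{s ≤ min(s_X,s_{X^δ})} |X(s) - X^δ(s)|) · (1/s_X + 1/s_{X^δ})`. -/
theorem retarded_angle_estimate :
    ∃ c : ℝ, 0 < c ∧
      ∀ (T C K : ℝ), 0 < T → 0 < C → 0 < K → 1 < C * K →
      ∀ (X Xδ X' Xδ' : ℝ → EuclideanSpace ℝ (Fin 3)),
      (∀ s ∈ Set.Icc (0:ℝ) T, HasDerivAt X (X' s) s) →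
      (∀ s ∈ Set.Icc (0:ℝ) T, HasDerivAt Xδ (Xδ' s) s) →
      (∀ s ∈ Set.Icc (0:ℝ) T, ‖X' s‖ ≤ 1 - 1/(C*K)) →
      (∀ s ∈ Set.Icc (0:ℝ) T, ‖Xδ' s‖ ≤ 1 - 1/(C*K)) →
      ∀ (z : EuclideanSpace ℝ (Fin 3)) (sX sXδ : ℝ)
        (ωX ωXδ : EuclideanSpace ℝ (Fin 3)),
      0 < sX → sX ≤ T → 0 < sXδ → sXδ ≤ T →
      ‖ωX‖ = 1 → ‖ωXδ‖ = 1 →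
      z = X sX - sX • ωX → z = Xδ sXδ - sXδ • ωXδ →
      ‖ωX - ωXδ‖ ≤ c * C * K *
          (⨆ s ∈ Set.Icc (0:ℝ) (min sX sXδ), ‖X s - Xδ s‖) * (1/sX + 1/sXδ) := by
  refine ⟨2, two_pos, ?_⟩
  intro T C K hT hC hK hCK X Xδ X' Xδ' hX hXδ hX' hXδ' z sX sXδ ωX ωXδ
    hsX hsXT hsXδ hsXδT hωX hωXδ hz1 hz2
  rcases le_total sX sXδ with hle | hle
  · exact angle_aux T C K hT hC hK hCK X Xδ X' Xδ' hX hXδ hX' hXδ' z sX sXδ ωX ωXδ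
      hsX hsXT hsXδ hsXδT hωX hωXδ hz1 hz2 hle
  · have h := angle_aux T C K hT hC hK hCK Xδ X Xδ' X' hXδ hX hXδ' hX' z sXδ sX ωXδ ωX
      hsXδ hsXδT hsX hsXT hωXδ hωX hz2 hz1 hle
    have hsup : (⨆ s ∈ Set.Icc (0:ℝ) (min sXδ sX), ‖Xδ s - X s‖)
        = ⨆ s ∈ Set.Icc (0:ℝ) (min sX sXδ), ‖X s - Xδ s‖ := by
      rw [min_comm]
      exact iSup_congr fun s => iSup_congr fun _ => norm_sub_rev _ _
    rw [norm_sub_rev ωX ωXδ]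
    rw [hsup] at h
    calc ‖ωXδ - ωX‖ ≤ 2 * C * K *
          (⨆ s ∈ Set.Icc (0:ℝ) (min sX sXδ), ‖X s - Xδ s‖) * (1/sXδ + 1/sX) := h
      _ = 2 * C * K *
          (⨆ s ∈ Set.Icc (0:ℝ) (min sX sXδ), ‖X s - Xδ s‖) * (1/sX + 1/sXδ) := by ring
end

section
/- (Occupation-time bound near a resonant velocity) Let (X,V)(t,·,·) be a flow on ℝ × ℝ^d preserving Lebesgue measure, with trajectories contained in a compact set Ω̃ for initial data in a compact Ω and t ∈ [0,T]. Let α ∈ W^{1,∞}(ℝ^d) satisfy |{v : |α(v) - w| ≤ η}| ≤ Cη for all w ∈ ℝ, η > 0 (nondegeneracy). Define ω(w,η,K) = {(x,v) ∈ Ω : |{t ∈ [0,T] : |α(V(t,x,v)) - w| ≤ η}| ≥ Kη}. Then |ω(w,η,K)| ≤ C'/K with C' depending only on T, Ω̃, C (not on w, η). -/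
open MeasureTheory Set ENNReal

/-- occupation-time bound near a resonant velocity: for a
measure-preserving flow on `ℝ × ℝ^d` with trajectories from the compact `Ω` staying in
the compact `Ω̃`, and `α` Lipschitz satisfying the nondegeneracy
`|{v : |α(v)-w| ≤ η}| ≤ Cη`, the set
`ω(w,η,K) = {(x,v) ∈ Ω : |{t ∈ [0,T] : |α(V(t,x,v)) - w| ≤ η}| ≥ Kη}`
has measure at most `C'/K`, with `C'` depending only on `T`, `Ω̃`, `C`. -/
theorem occupation_time_bound
    (d : ℕ) (T : ℝ) (hT : 0 < T)
    (Ω Ω' : Set (ℝ × EuclideanSpace ℝ (Fin d)))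
    (hΩ : IsCompact Ω) (hΩ' : IsCompact Ω') (Cα : ℝ) (hCα : 0 < Cα) :
    ∃ C' : ℝ, 0 < C' ∧
      ∀ (α : EuclideanSpace ℝ (Fin d) → ℝ) (L : NNReal), LipschitzWith L α →
        (∀ (w η : ℝ), 0 < η →
          volume {v : EuclideanSpace ℝ (Fin d) | |α v - w| ≤ η}
            ≤ ENNReal.ofReal (Cα * η)) →
      ∀ (φ : ℝ → (ℝ × EuclideanSpace ℝ (Fin d)) → (ℝ × EuclideanSpace ℝ (Fin d))),
        Measurable (Function.uncurry φ) →
        (∀ t : ℝ, MeasurePreserving (φ t) volume volume) →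
        (∀ p ∈ Ω, ∀ t ∈ Set.Icc (0:ℝ) T, φ t p ∈ Ω') →
      ∀ (w η K : ℝ), 0 < η → 0 < K →
        volume {p | p ∈ Ω ∧
            ENNReal.ofReal (K * η)
              ≤ volume {t ∈ Set.Icc (0:ℝ) T | |α (φ t p).2 - w| ≤ η}}
          ≤ ENNReal.ofReal (C' / K) := by
  classical
  obtain ⟨r, hr⟩ := hΩ'.isBounded.subset_closedBall 0
  set R : ℝ := max r 0 + 1 with hRdef
  have hRpos : (0:ℝ) < R := by positivity
  refine ⟨T * (2 * R) * Cα, by positivity, ?_⟩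
  intro α L hL hnd φ hφ hmp hstay w η K hη hK
  have hαmeas : Measurable α := hL.continuous.measurable
  set S : Set (EuclideanSpace ℝ (Fin d)) := {v | |α v - w| ≤ η} with hSdef
  have hSmeas : MeasurableSet S :=
    measurableSet_le (by measurability) measurable_const
  set B : Set (ℝ × EuclideanSpace ℝ (Fin d)) := Set.Icc (-R) R ×ˢ S with hBdef
  have hBmeas : MeasurableSet B := measurableSet_Icc.prod hSmeas
  have hBvol : volume B ≤ ENNReal.ofReal (2 * R) * ENNReal.ofReal (Cα * η) := by
    rw [hBdef, show (volume : Measure (ℝ × EuclideanSpace ℝ (Fin d)))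
        = (volume : Measure ℝ).prod volume from Measure.volume_eq_prod _ _,
      Measure.prod_prod, Real.volume_Icc]
    have : R - -R = 2 * R := by ring
    rw [this]
    exact mul_le_mul_right (hnd w η hη) _
  -- the measurable "occupation" function
  set A : Set ((ℝ × EuclideanSpace ℝ (Fin d)) × ℝ) :=
    {q | q.2 ∈ Set.Icc (0:ℝ) T ∧ q.1 ∈ Ω ∧ |α (φ q.2 q.1).2 - w| ≤ η} with hAdef
  have hAmeas : MeasurableSet A := by
    have h1 : MeasurableSet {q : (ℝ × EuclideanSpace ℝ (Fin d)) × ℝ |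
        q.2 ∈ Set.Icc (0:ℝ) T} := measurable_snd measurableSet_Icc
    have h2 : MeasurableSet {q : (ℝ × EuclideanSpace ℝ (Fin d)) × ℝ | q.1 ∈ Ω} :=
      measurable_fst (hΩ.isClosed.measurableSet)
    have hcomp : Measurable (fun q : (ℝ × EuclideanSpace ℝ (Fin d)) × ℝ =>
        |α ((Function.uncurry φ) (q.2, q.1)).2 - w|) := by
      exact ((hαmeas.comp ((hφ.comp measurable_swap).snd)).sub measurable_const).abs
    have h3 : MeasurableSet {q : (ℝ × EuclideanSpace ℝ (Fin d)) × ℝ |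
        |α (φ q.2 q.1).2 - w| ≤ η} :=
      measurableSet_le hcomp measurable_const
    have h := (h1.inter h2).inter h3
    convert h using 1
    ext q; simp [hAdef, and_assoc]
  set f : (ℝ × EuclideanSpace ℝ (Fin d)) → ℝ≥0∞ :=
    fun p => ∫⁻ t, A.indicator 1 (p, t) with hfdef
  have hfmeas : Measurable f :=
    Measurable.lintegral_prod_right' (measurable_one.indicator hAmeas)
  -- on Ω, f equals the occupation time
  have hfocc : ∀ p ∈ Ω,
      f p = volume {t ∈ Set.Icc (0:ℝ) T | |α (φ t p).2 - w| ≤ η} := by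
    intro p hp
    have hset : {t ∈ Set.Icc (0:ℝ) T | |α (φ t p).2 - w| ≤ η}
        = {t : ℝ | (p, t) ∈ A} := by
      ext t; simp [hAdef, hp, and_assoc]
    rw [hset]
    have hsec : MeasurableSet {t : ℝ | (p, t) ∈ A} :=
      measurable_prodMk_left hAmeas
    rw [hfdef]
    simp only
    rw [show (fun t => A.indicator 1 (p, t))
        = {t : ℝ | (p, t) ∈ A}.indicator (1 : ℝ → ℝ≥0∞) from by
          ext t; by_cases h : (p, t) ∈ A <;> simp [Set.indicator, h]]
    exact lintegral_indicator_one hsec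
  -- Chebyshev
  have hcheb : ENNReal.ofReal (K * η) * volume {p | p ∈ Ω ∧
      ENNReal.ofReal (K * η)
        ≤ volume {t ∈ Set.Icc (0:ℝ) T | |α (φ t p).2 - w| ≤ η}}
      ≤ ∫⁻ p, f p := by
    refine le_trans (mul_le_mul_right
      (measure_mono (fun p hp => ?_)) _) (mul_meas_ge_le_lintegral hfmeas _)
    obtain ⟨hpΩ, hple⟩ := hp
    show ENNReal.ofReal (K * η) ≤ f p
    rw [hfocc p hpΩ]; exact hple
  -- Fubini and the flow bound
  have hswap : ∫⁻ p, f p = ∫⁻ t, ∫⁻ p, A.indicator 1 (p, t) := by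
    exact lintegral_lintegral_swap
      ((measurable_one.indicator hAmeas).aemeasurable)
  have hinner : ∀ t : ℝ, (∫⁻ p, A.indicator 1 (p, t))
      ≤ (Set.Icc (0:ℝ) T).indicator
          (fun _ => ENNReal.ofReal (2 * R) * ENNReal.ofReal (Cα * η)) t := by
    intro t
    have hsec : MeasurableSet {p : ℝ × EuclideanSpace ℝ (Fin d) | (p, t) ∈ A} :=
      measurable_prodMk_right hAmeas
    have hrw : (fun p : ℝ × EuclideanSpace ℝ (Fin d) => A.indicator 1 (p, t))
        = {p : ℝ × EuclideanSpace ℝ (Fin d) | (p, t) ∈ A}.indicator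
            (1 : (ℝ × EuclideanSpace ℝ (Fin d)) → ℝ≥0∞) := by
      ext p; by_cases h : (p, t) ∈ A <;> simp [Set.indicator, h]
    rw [hrw, lintegral_indicator_one hsec]
    by_cases ht : t ∈ Set.Icc (0:ℝ) T
    · rw [Set.indicator_of_mem ht]
      have hsub : {p : ℝ × EuclideanSpace ℝ (Fin d) | (p, t) ∈ A}
          ⊆ φ t ⁻¹' B := by
        intro p hp
        obtain ⟨-, hpΩ, hpα⟩ := hp
        have hmem := hstay p hpΩ t ht
        have hdist := hr hmem
        rw [Metric.mem_closedBall] at hdist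
        constructor
        · have h1 : |((φ t p).1 : ℝ)| ≤ r := by
            calc |((φ t p).1 : ℝ)| = dist (φ t p).1 (0:ℝ) := by
                  simp [Real.dist_eq]
              _ ≤ dist (φ t p) (0 : ℝ × EuclideanSpace ℝ (Fin d)) := by
                  rw [Prod.dist_eq]; exact le_max_left _ _
              _ ≤ r := hdist
          have h2 : r ≤ R - 1 := by
            rw [hRdef]; simp [le_max_left]
          constructor
          · have := abs_le.mp h1
            linarith [this.1]
          · have := abs_le.mp h1
            linarith [this.2]
        · exact hpα
      calc volume {p : ℝ × EuclideanSpace ℝ (Fin d) | (p, t) ∈ A}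
          ≤ volume (φ t ⁻¹' B) := measure_mono hsub
        _ = volume B := (hmp t).measure_preimage hBmeas.nullMeasurableSet
        _ ≤ ENNReal.ofReal (2 * R) * ENNReal.ofReal (Cα * η) := hBvol
    · rw [Set.indicator_of_notMem ht]
      have : {p : ℝ × EuclideanSpace ℝ (Fin d) | (p, t) ∈ A} = ∅ := by
        ext p; simp only [Set.mem_setOf_eq, Set.mem_empty_iff_false, iff_false]
        intro hp; exact ht hp.1
      rw [this]; simp
  have houter : (∫⁻ t, ∫⁻ p, A.indicator 1 (p, t))
      ≤ ENNReal.ofReal (T * (2 * R) * Cα * η) := by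
    calc (∫⁻ t, ∫⁻ p, A.indicator 1 (p, t))
        ≤ ∫⁻ t, (Set.Icc (0:ℝ) T).indicator
            (fun _ => ENNReal.ofReal (2 * R) * ENNReal.ofReal (Cα * η)) t :=
          lintegral_mono hinner
      _ = ENNReal.ofReal (2 * R) * ENNReal.ofReal (Cα * η)
            * volume (Set.Icc (0:ℝ) T) := by
          rw [lintegral_indicator_const measurableSet_Icc]
      _ = ENNReal.ofReal (T * (2 * R) * Cα * η) := by
          rw [Real.volume_Icc]
          rw [← ENNReal.ofReal_mul (by positivity), ← ENNReal.ofReal_mul (by positivity)]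
          congr 1; ring_nf
  -- conclude
  have hKη : (0:ℝ) < K * η := by positivity
  rw [show (T * (2 * R) * Cα) / K = (T * (2 * R) * Cα * η) / (K * η) from by
    field_simp]
  rw [ENNReal.ofReal_div_of_pos hKη]
  rw [ENNReal.le_div_iff_mul_le
    (Or.inl (by simp [ENNReal.ofReal_eq_zero]; linarith))
    (Or.inl ENNReal.ofReal_ne_top)]
  calc volume {p | p ∈ Ω ∧ ENNReal.ofReal (K * η)
        ≤ volume {t ∈ Set.Icc (0:ℝ) T | |α (φ t p).2 - w| ≤ η}}
        * ENNReal.ofReal (K * η)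
      = ENNReal.ofReal (K * η) * volume {p | p ∈ Ω ∧ ENNReal.ofReal (K * η)
        ≤ volume {t ∈ Set.Icc (0:ℝ) T | |α (φ t p).2 - w| ≤ η}} := mul_comm _ _
    _ ≤ ∫⁻ p, f p := hcheb
    _ = _ := hswap
    _ ≤ ENNReal.ofReal (T * (2 * R) * Cα * η) := houter
end

section
/- (Occupation-time bound near countably many resonant velocities) In the setting of the previous lemma, let (ξ_n) be a sequence of real numbers and (a_n) positive reals with Σ a_n < ∞. Define ω(η,K) = {(x,v) ∈ Ω : |{t ∈ [0,T] : ∃n, |α(V(t,x,v)) - ξ_n| ≤ a_n η}| ≥ Kη}. Then |ω(η,K)| ≤ C/K with C depending on T, Ω̃ and Σ a_n but not on η or K. -/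
open MeasureTheory Set

/-- occupation-time bound near countably many resonant velocities:
in the setting of the single-resonance occupation-time lemma, for speeds `(ξ_n)` and
positive weights `(a_n)` with `Σ a_n < ∞`, the set
`ω(η,K) = {(x,v) ∈ Ω : |{t ∈ [0,T] : ∃n, |α(V(t,x,v)) - ξ_n| ≤ a_n η}| ≥ Kη}`
has measure at most `C/K`, with `C` depending on `T`, `Ω̃` and `Σ a_n` but not on
`η` or `K`. -/
theorem occupation_time_bound_countable
    (d : ℕ) (T : ℝ) (hT : 0 < T)
    (Ω Ω' : Set (ℝ × EuclideanSpace ℝ (Fin d)))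
    (hΩ : IsCompact Ω) (hΩ' : IsCompact Ω') (Cα : ℝ) (hCα : 0 < Cα)
    (a : ℕ → ℝ) (ha : ∀ n, 0 < a n) (hsum : Summable a) :
    ∃ C : ℝ, 0 < C ∧
      ∀ (ξ : ℕ → ℝ)
        (α : EuclideanSpace ℝ (Fin d) → ℝ) (L : NNReal), LipschitzWith L α →
        (∀ (w η : ℝ), 0 < η →
          volume {v : EuclideanSpace ℝ (Fin d) | |α v - w| ≤ η}
            ≤ ENNReal.ofReal (Cα * η)) →
      ∀ (φ : ℝ → (ℝ × EuclideanSpace ℝ (Fin d)) → (ℝ × EuclideanSpace ℝ (Fin d))),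
        Measurable (Function.uncurry φ) →
        (∀ t : ℝ, MeasurePreserving (φ t) volume volume) →
        (∀ p ∈ Ω, ∀ t ∈ Set.Icc (0:ℝ) T, φ t p ∈ Ω') →
      ∀ (η K : ℝ), 0 < η → 0 < K →
        volume {p | p ∈ Ω ∧
            ENNReal.ofReal (K * η)
              ≤ volume {t ∈ Set.Icc (0:ℝ) T | ∃ n, |α (φ t p).2 - ξ n| ≤ a n * η}}
          ≤ ENNReal.ofReal (C / K) := by
  classical
  -- bound the first coordinate of Ω'
  obtain ⟨r, hr⟩ := (hΩ'.image continuous_fst).isBounded.subset_closedBall 0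
  obtain ⟨R, hRpos, hΩ'R⟩ : ∃ R : ℝ, 0 < R ∧ ∀ q ∈ Ω', q.1 ∈ Set.Icc (-R) R := by
    refine ⟨max r 1, lt_of_lt_of_le one_pos (le_max_right _ _), ?_⟩
    intro q hq
    have : q.1 ∈ Metric.closedBall (0:ℝ) r := hr ⟨q, hq, rfl⟩
    rw [Real.closedBall_eq_Icc] at this
    constructor
    · have := this.1; have := le_max_left r 1; simp only [zero_sub] at *; linarith
    · have := this.2; have := le_max_left r 1; simp only [zero_add] at *; linarith
  obtain ⟨A, hAdef, hApos⟩ : ∃ A : ℝ, A = ∑' n, a n ∧ 0 < A :=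
    ⟨_, rfl, Summable.tsum_pos hsum (fun n => (ha n).le) 0 (ha 0)⟩
  refine ⟨2 * R * Cα * A * T, by positivity, ?_⟩
  intro ξ α L hL hα φ hφmeas hmp hmap η K hη hK
  set C : ℝ := 2 * R * Cα * A * T with hCdef
  have hCpos : 0 < C := by positivity
  have hαmeas : Measurable α := (hL.continuous).measurable
  have hΩmeas : MeasurableSet Ω := hΩ.isClosed.measurableSet
  have hΩ'meas : MeasurableSet Ω' := hΩ'.isClosed.measurableSet
  -- the bad sets in phase space
  set B : ℕ → Set (ℝ × EuclideanSpace ℝ (Fin d)) :=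
    fun n => {q | |α q.2 - ξ n| ≤ a n * η} with hBdef
  have hBmeas : ∀ n, MeasurableSet (B n) := fun n =>
    measurableSet_le ((hαmeas.comp measurable_snd).sub measurable_const).abs
      measurable_const
  set W : Set (ℝ × EuclideanSpace ℝ (Fin d)) := Ω' ∩ ⋃ n, B n with hWdef
  have hWmeas : MeasurableSet W := hΩ'meas.inter (MeasurableSet.iUnion hBmeas)
  -- bound the measure of W
  have hWbound : volume W ≤ ENNReal.ofReal (2 * R * Cα * A * η) := by
    have h1 : volume W ≤ ∑' n, volume (Ω' ∩ B n) := by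
      have : W ⊆ ⋃ n, (Ω' ∩ B n) := by
        rintro q ⟨hq1, hq2⟩
        rcases mem_iUnion.1 hq2 with ⟨n, hn⟩
        exact mem_iUnion.2 ⟨n, hq1, hn⟩
      exact (measure_mono this).trans (measure_iUnion_le _)
    have h2 : ∀ n, volume (Ω' ∩ B n)
        ≤ ENNReal.ofReal (2 * R) * ENNReal.ofReal (Cα * η * a n) := by
      intro n
      have hsub : Ω' ∩ B n ⊆ (Set.Icc (-R) R) ×ˢ
          {v : EuclideanSpace ℝ (Fin d) | |α v - ξ n| ≤ a n * η} := by
        rintro q ⟨hq1, hq2⟩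
        exact ⟨hΩ'R q hq1, hq2⟩
      calc volume (Ω' ∩ B n)
          ≤ volume ((Set.Icc (-R) R) ×ˢ
              {v : EuclideanSpace ℝ (Fin d) | |α v - ξ n| ≤ a n * η}) :=
            measure_mono hsub
        _ = volume (Set.Icc (-R) R)
              * volume {v : EuclideanSpace ℝ (Fin d) | |α v - ξ n| ≤ a n * η} := by
            rw [Measure.volume_eq_prod, Measure.prod_prod]
        _ ≤ ENNReal.ofReal (2 * R) * ENNReal.ofReal (Cα * (a n * η)) := by
            apply mul_le_mul'
            · rw [Real.volume_Icc]
              apply le_of_eq; congr 1; ring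
            · exact hα (ξ n) (a n * η) (by have := ha n; positivity)
        _ = ENNReal.ofReal (2 * R) * ENNReal.ofReal (Cα * η * a n) := by ring_nf
    calc volume W ≤ ∑' n, volume (Ω' ∩ B n) := h1
      _ ≤ ∑' n, ENNReal.ofReal (2 * R) * ENNReal.ofReal (Cα * η * a n) :=
          ENNReal.tsum_le_tsum h2
      _ = ENNReal.ofReal (2 * R) * ∑' n, ENNReal.ofReal (Cα * η * a n) :=
          ENNReal.tsum_mul_left
      _ = ENNReal.ofReal (2 * R) * ENNReal.ofReal (Cα * η * A) := by
          congr 1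
          rw [← ENNReal.ofReal_tsum_of_nonneg
            (fun n => by have := ha n; positivity) (hsum.mul_left (Cα * η))]
          congr 1
          rw [hAdef, tsum_mul_left]
      _ = ENNReal.ofReal (2 * R * Cα * A * η) := by
          rw [← ENNReal.ofReal_mul (by positivity)]
          congr 1; ring
  -- the product-space bad set
  set S : Set ((ℝ × EuclideanSpace ℝ (Fin d)) × ℝ) :=
    {q | q.2 ∈ Set.Icc (0:ℝ) T ∧ ∃ n, |α (φ q.2 q.1).2 - ξ n| ≤ a n * η} with hSdef
  have hg : Measurable (fun q : (ℝ × EuclideanSpace ℝ (Fin d)) × ℝ => φ q.2 q.1) := by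
    have : (fun q : (ℝ × EuclideanSpace ℝ (Fin d)) × ℝ => φ q.2 q.1)
        = Function.uncurry φ ∘ Prod.swap := rfl
    rw [this]; exact hφmeas.comp measurable_swap
  have hSmeas : MeasurableSet S := by
    have : S = {q : (ℝ × EuclideanSpace ℝ (Fin d)) × ℝ | q.2 ∈ Set.Icc (0:ℝ) T}
        ∩ ⋃ n, {q : (ℝ × EuclideanSpace ℝ (Fin d)) × ℝ
            | |α (φ q.2 q.1).2 - ξ n| ≤ a n * η} := by
      ext q
      simp only [hSdef, Set.mem_setOf_eq, Set.mem_inter_iff, Set.mem_iUnion]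
    rw [this]
    refine (measurable_snd measurableSet_Icc).inter (MeasurableSet.iUnion fun n => ?_)
    exact measurableSet_le ((hαmeas.comp (measurable_snd.comp hg)).sub
      measurable_const).abs measurable_const
  set μ : Measure (ℝ × EuclideanSpace ℝ (Fin d)) := volume.restrict Ω with hμdef
  set f : (ℝ × EuclideanSpace ℝ (Fin d)) → ENNReal :=
    fun p => volume (Prod.mk p ⁻¹' S) with hfdef
  have hfmeas : Measurable f := measurable_measure_prodMk_left hSmeas
  -- Fubini/Tonelli
  have hI : ∫⁻ p, f p ∂μ ≤ ENNReal.ofReal (C * η) := by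
    have heq : ∫⁻ p, f p ∂μ = (μ.prod volume) S := (Measure.prod_apply hSmeas).symm
    rw [heq, Measure.prod_apply_symm hSmeas]
    have hslice : ∀ t : ℝ, μ ((fun p => (p, t)) ⁻¹' S)
        ≤ Set.indicator (Set.Icc (0:ℝ) T)
            (fun _ => ENNReal.ofReal (2 * R * Cα * A * η)) t := by
      intro t
      by_cases ht : t ∈ Set.Icc (0:ℝ) T
      · rw [Set.indicator_of_mem ht]
        have hsub : ((fun p => (p, t)) ⁻¹' S) ∩ Ω ⊆ φ t ⁻¹' W := by
          rintro p ⟨⟨-, n, hn⟩, hpΩ⟩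
          exact ⟨hmap p hpΩ t ht, mem_iUnion.2 ⟨n, hn⟩⟩
        calc μ ((fun p => (p, t)) ⁻¹' S)
            = volume (((fun p => (p, t)) ⁻¹' S) ∩ Ω) := Measure.restrict_apply' hΩmeas
          _ ≤ volume (φ t ⁻¹' W) := measure_mono hsub
          _ = volume W := (hmp t).measure_preimage hWmeas.nullMeasurableSet
          _ ≤ ENNReal.ofReal (2 * R * Cα * A * η) := hWbound
      · have hempty : ((fun p => (p, t)) ⁻¹' S) = ∅ := by
          ext p; simp only [Set.mem_preimage, Set.mem_empty_iff_false, iff_false, hSdef,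
            Set.mem_setOf_eq, not_and]
          intro ht'; exact absurd ht' ht
        rw [Set.indicator_of_notMem ht, hempty]
        simp
    calc ∫⁻ t, μ ((fun p => (p, t)) ⁻¹' S) ∂volume
        ≤ ∫⁻ t, Set.indicator (Set.Icc (0:ℝ) T)
            (fun _ => ENNReal.ofReal (2 * R * Cα * A * η)) t ∂volume :=
          lintegral_mono hslice
      _ = ENNReal.ofReal (2 * R * Cα * A * η) * volume (Set.Icc (0:ℝ) T) := by
          rw [lintegral_indicator measurableSet_Icc, setLIntegral_const]
      _ = ENNReal.ofReal (2 * R * Cα * A * η) * ENNReal.ofReal T := by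
          rw [Real.volume_Icc]; norm_num
      _ = ENNReal.ofReal (C * η) := by
          rw [← ENNReal.ofReal_mul (by positivity)]
          congr 1; rw [hCdef]; ring
  -- Chebyshev
  have hcheb : ENNReal.ofReal (K * η) * μ {p | ENNReal.ofReal (K * η) ≤ f p}
      ≤ ∫⁻ p, f p ∂μ := mul_meas_ge_le_lintegral₀ hfmeas.aemeasurable _
  have hsetEq : {p : ℝ × EuclideanSpace ℝ (Fin d) | p ∈ Ω ∧
      ENNReal.ofReal (K * η)
        ≤ volume {t ∈ Set.Icc (0:ℝ) T | ∃ n, |α (φ t p).2 - ξ n| ≤ a n * η}}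
      = {p | ENNReal.ofReal (K * η) ≤ f p} ∩ Ω := by
    ext p
    simp only [Set.mem_setOf_eq, Set.mem_inter_iff]
    exact ⟨fun ⟨h1, h2⟩ => ⟨h2, h1⟩, fun ⟨h1, h2⟩ => ⟨h2, h1⟩⟩
  rw [hsetEq, ← Measure.restrict_apply' hΩmeas]
  have hKη : (0:ℝ) < K * η := by positivity
  have h0 : ENNReal.ofReal (K * η) ≠ 0 := by
    simp [ENNReal.ofReal_eq_zero, not_le, hKη]
  have htop : ENNReal.ofReal (K * η) ≠ ⊤ := ENNReal.ofReal_ne_top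
  have hmul : μ {p | ENNReal.ofReal (K * η) ≤ f p} * ENNReal.ofReal (K * η)
      ≤ ENNReal.ofReal (C * η) := by rw [mul_comm]; exact hcheb.trans hI
  have hfin : μ {p | ENNReal.ofReal (K * η) ≤ f p}
      ≤ ENNReal.ofReal (C * η) / ENNReal.ofReal (K * η) :=
    (ENNReal.le_div_iff_mul_le (Or.inl h0) (Or.inl htop)).2 hmul
  refine hfin.trans ?_
  rw [← ENNReal.ofReal_div_of_pos hKη]
  apply ENNReal.ofReal_le_ofReal
  rw [div_le_div_iff₀ hKη hK]
  ring_nf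
  exact le_of_eq (by ring)
end
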